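/- For any α ∈ (0,1] and μ > 0, the set C^α_μ of all continuous paths γ_t : [0,t] → ℝ^n (with t ranging over [0,T], γ_t(0) = 0) whose α-Hölder modulus ⟦γ_t⟧_α = sup_{0≤s<r≤t} |γ_t(s)−γ_t(r)|/|s−r|^α is at most μ, is a compact subset of the space Λ of all such continuous paths equipped with the parabolic metric d_p(γ_t, γ̄_{t̄}) := √|t−t̄| + sup_{0≤s≤t̄} |γ_{t,t̄}(s) − γ̄_{t̄}(s)|, where γ_{t,t̄} extends γ_t constantly to [0,t̄] (assuming t ≤ t̄). -/

import Mathlib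

open Set

/-- The parabolic metric `d_p` on the space `Λ` of stopped paths:
a stopped path is a pair `(t, γ)` where the relevant values of `γ` are those on `[0, t]`;
the shorter path is extended constantly (via `min s t`) to compare on `[0, max t t']`. -/
noncomputable def parabolicDist {n : ℕ} (p q : ℝ × (ℝ → EuclideanSpace ℝ (Fin n))) : ℝ :=
  Real.sqrt |p.1 - q.1| +
    ⨆ s : Set.Icc (0 : ℝ) (max p.1 q.1), ‖p.2 (min s.1 p.1) - q.2 (min s.1 q.1)‖

/-- The set `C^α_μ ⊆ Λ`: stopped paths `(t, γ)` with `t ∈ [0,T]`, `γ` continuous on `[0,t]`,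
`γ 0 = 0`, whose `α`-Hölder modulus on `[0,t]` is at most `μ`. -/
def holderBall (n : ℕ) (T α μ : ℝ) : Set (ℝ × (ℝ → EuclideanSpace ℝ (Fin n))) :=
  {p | p.1 ∈ Icc (0 : ℝ) T ∧ ContinuousOn p.2 (Icc 0 p.1) ∧ p.2 0 = 0 ∧
    ∀ s ∈ Icc (0 : ℝ) p.1, ∀ r ∈ Icc (0 : ℝ) p.1, ‖p.2 s - p.2 r‖ ≤ μ * |s - r| ^ α}

lemma min_sub_min_le_abs' (a b c : ℝ) : min a c - min b c ≤ |a - b| := by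
  have h1 := le_abs_self (a - b); have h2 := abs_nonneg (a - b)
  rcases min_cases a c with ⟨e, h⟩ | ⟨e, h⟩ <;> rcases min_cases b c with ⟨e', h'⟩ | ⟨e', h'⟩ <;>
    rw [e, e'] <;> linarith

lemma abs_min_sub_min_le' (a b c : ℝ) : |min a c - min b c| ≤ |a - b| := by
  rw [abs_sub_le_iff]
  exact ⟨min_sub_min_le_abs' a b c, (abs_sub_comm a b) ▸ min_sub_min_le_abs' b a c⟩

set_option maxHeartbeats 1000000 in
set_option synthInstance.maxHeartbeats 400000 in
/-- `C^α_μ` is a (sequentially) compact subset of `(Λ, d_p)`: every sequence in `C^α_μ`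
admits a subsequence converging, in the parabolic metric, to a limit lying in `C^α_μ`. -/
theorem holderBall_isSeqCompact {n : ℕ} (T α μ : ℝ) (hT : 0 < T) (hα : 0 < α) (hα1 : α ≤ 1)
    (hμ : 0 < μ) (γ : ℕ → ℝ × (ℝ → EuclideanSpace ℝ (Fin n)))
    (hγ : ∀ k, γ k ∈ holderBall n T α μ) :
    ∃ φ : ℕ → ℕ, StrictMono φ ∧ ∃ p ∈ holderBall n T α μ,
      Filter.Tendsto (fun k => parabolicDist (γ (φ k)) p) Filter.atTop (nhds 0) := by
  classical
  have hT0 : (0 : ℝ) ≤ T := hT.le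
  have zero_mem : (0 : ℝ) ∈ Icc (0 : ℝ) T := ⟨le_refl 0, hT0⟩
  -- clamp
  set cl : ℝ → ℝ → ℝ := fun t s => min (max s 0) t with hcl
  have cl_mem : ∀ t s : ℝ, 0 ≤ t → cl t s ∈ Icc 0 t := fun t s ht =>
    ⟨le_min (le_max_right s 0) ht, min_le_right _ _⟩
  have cl_lip : ∀ t s r : ℝ, |cl t s - cl t r| ≤ |s - r| :=
    fun t s r => (abs_min_sub_min_le' _ _ _).trans (abs_max_sub_max_le_abs s r 0)
  have cl_of_mem : ∀ t s : ℝ, s ∈ Icc 0 t → cl t s = s := by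
    intro t s hs
    simp only [hcl, max_eq_left hs.1, min_eq_left hs.2]
  have ht : ∀ k, (γ k).1 ∈ Icc (0 : ℝ) T := fun k => (hγ k).1
  set f : ℕ → ℝ → EuclideanSpace ℝ (Fin n) := fun k s => (γ k).2 (cl (γ k).1 s) with hf
  have hf_hold : ∀ k s r, ‖f k s - f k r‖ ≤ μ * |s - r| ^ α := by
    intro k s r
    calc ‖f k s - f k r‖ ≤ μ * |cl (γ k).1 s - cl (γ k).1 r| ^ α :=
          (hγ k).2.2.2 _ (cl_mem _ s (ht k).1) _ (cl_mem _ r (ht k).1)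
      _ ≤ μ * |s - r| ^ α :=
          mul_le_mul_of_nonneg_left
            (Real.rpow_le_rpow (abs_nonneg _) (cl_lip _ s r) hα.le) hμ.le
  have hf_cont : ∀ k, Continuous (f k) := by
    intro k
    exact ((hγ k).2.1).comp_continuous
      (((continuous_id.max continuous_const).min continuous_const))
      (fun s => cl_mem _ s (ht k).1)
  have hf_zero : ∀ k, f k 0 = 0 := by
    intro k
    have h00 : cl (γ k).1 0 = 0 := cl_of_mem _ 0 ⟨le_refl 0, (ht k).1⟩
    simp only [hf, h00]
    exact (hγ k).2.2.1
  set g : ℕ → (BoundedContinuousFunction (Icc (0 : ℝ) T) (EuclideanSpace ℝ (Fin n))) := fun k =>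
    BoundedContinuousFunction.mkOfCompact
      ⟨fun x => f k x.1, (hf_cont k).comp continuous_subtype_val⟩ with hg
  have hg_apply : ∀ k x, g k x = f k x.1 := fun k x => rfl
  -- the set A
  set A : Set (BoundedContinuousFunction (Icc (0 : ℝ) T) (EuclideanSpace ℝ (Fin n))) :=
    {h | h ⟨0, zero_mem⟩ = 0} ∩
      ⋂ (s : Icc (0 : ℝ) T), ⋂ (r : Icc (0 : ℝ) T),
        {h | dist (h s) (h r) ≤ μ * |s.1 - r.1| ^ α} with hA
  have memA_iff : ∀ h : BoundedContinuousFunction (Icc (0 : ℝ) T) (EuclideanSpace ℝ (Fin n)),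
      h ∈ A ↔ h ⟨0, zero_mem⟩ = 0 ∧ ∀ s r : Icc (0 : ℝ) T,
        dist (h s) (h r) ≤ μ * |s.1 - r.1| ^ α := by
    intro h
    constructor
    · rintro ⟨h0, hset⟩
      exact ⟨h0, fun s r => Set.mem_iInter.1 (Set.mem_iInter.1 hset s) r⟩
    · rintro ⟨h0, hH⟩
      exact ⟨h0, Set.mem_iInter.2 fun s => Set.mem_iInter.2 fun r => hH s r⟩
  have hg_mem : ∀ k, g k ∈ A := by
    intro k
    rw [memA_iff]
    constructor
    · show f k 0 = 0
      exact hf_zero k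
    · intro s r
      rw [hg_apply, hg_apply, dist_eq_norm]
      exact hf_hold k s.1 r.1
  have hA_closed : IsClosed A := by
    apply IsClosed.inter
    · exact isClosed_eq (continuous_eval_const _) continuous_const
    · refine isClosed_iInter fun s => isClosed_iInter fun r => ?_
      exact isClosed_le (Continuous.dist
        (continuous_eval_const _)
        (continuous_eval_const _)) continuous_const
  have hA_equi : Equicontinuous ((↑) : A → (Icc (0 : ℝ) T) → EuclideanSpace ℝ (Fin n)) := by
    apply Metric.equicontinuous_of_continuity_modulus (fun t => μ * |t| ^ α)
    · have h1 : ContinuousAt (fun x : ℝ => x ^ α) (|(0 : ℝ)|) := by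
        simpa using Real.continuousAt_rpow_const 0 α (Or.inr hα.le)
      have hc : ContinuousAt (fun t : ℝ => μ * |t| ^ α) 0 :=
        continuousAt_const.mul (h1.comp continuous_abs.continuousAt)
      have := hc.tendsto
      simpa [Real.zero_rpow hα.ne'] using this
    · intro x y i
      have := ((memA_iff i.1).1 i.2).2 x y
      refine this.trans ?_
      have : dist x y = |x.1 - y.1| := rfl
      rw [this, abs_abs]
  have hA_cpt : IsCompact A := by
    apply BoundedContinuousFunction.arzela_ascoli₂ (Metric.closedBall 0 (μ * T ^ α))
      (isCompact_closedBall _ _) A hA_closed _ hA_equi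
    intro h x hh
    rw [Metric.mem_closedBall]
    have h0 := ((memA_iff h).1 hh).1
    have := ((memA_iff h).1 hh).2 x ⟨0, zero_mem⟩
    rw [h0] at this
    refine le_trans (by simpa using this) ?_
    refine mul_le_mul_of_nonneg_left ?_ hμ.le
    apply Real.rpow_le_rpow (abs_nonneg _) _ hα.le
    rw [abs_of_nonneg (by simpa using x.2.1)]
    simpa using x.2.2
  have hK : IsCompact ((Icc (0 : ℝ) T) ×ˢ A) := isCompact_Icc.prod hA_cpt
  obtain ⟨⟨t0, G⟩, hmem, φ, hφ, hlim⟩ :=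
    hK.isSeqCompact (x := fun k => ((γ k).1, g k)) (fun k => ⟨ht k, hg_mem k⟩)
  obtain ⟨ht0, hGA⟩ := hmem
  have hG0 : G ⟨0, zero_mem⟩ = 0 := ((memA_iff G).1 hGA).1
  have hGH : ∀ s r : Icc (0 : ℝ) T, dist (G s) (G r) ≤ μ * |s.1 - r.1| ^ α :=
    ((memA_iff G).1 hGA).2
  refine ⟨φ, hφ, ?_⟩
  have cl_memT : ∀ s : ℝ, cl t0 s ∈ Icc (0 : ℝ) T :=
    fun s => ⟨(cl_mem t0 s ht0.1).1, (cl_mem t0 s ht0.1).2.trans ht0.2⟩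
  set q : ℝ → EuclideanSpace ℝ (Fin n) := fun s => G ⟨cl t0 s, cl_memT s⟩ with hq
  have hq_eq : ∀ s : ℝ, ∀ hs : s ∈ Icc 0 t0, q s = G ⟨s, ⟨hs.1, hs.2.trans ht0.2⟩⟩ := by
    intro s hs
    have hx : (⟨cl t0 s, cl_memT s⟩ : Icc (0 : ℝ) T) = ⟨s, ⟨hs.1, hs.2.trans ht0.2⟩⟩ :=
      Subtype.ext (cl_of_mem t0 s hs)
    show G ⟨cl t0 s, cl_memT s⟩ = _
    rw [hx]
  refine ⟨(t0, q), ⟨ht0, ?_, ?_, ?_⟩, ?_⟩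
  · exact (G.continuous.comp (Continuous.subtype_mk
      ((continuous_id.max continuous_const).min continuous_const) _)).continuousOn
  · show q 0 = 0
    rw [hq_eq 0 ⟨le_refl 0, ht0.1⟩]
    exact hG0
  · intro s hs r hr
    show ‖q s - q r‖ ≤ _
    rw [hq_eq s hs, hq_eq r hr, ← dist_eq_norm]
    exact hGH _ _
  -- convergence
  have h1 : Filter.Tendsto (fun k => (γ (φ k)).1) Filter.atTop (nhds t0) :=
    (continuous_fst.tendsto _).comp hlim
  have h2 : Filter.Tendsto (fun k => g (φ k)) Filter.atTop (nhds G) :=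
    (continuous_snd.tendsto _).comp hlim
  have habs : Filter.Tendsto (fun k => |(γ (φ k)).1 - t0|) Filter.atTop (nhds 0) := by
    have := (h1.sub_const t0).abs
    simpa using this
  have hsqrt : Filter.Tendsto (fun k => Real.sqrt |(γ (φ k)).1 - t0|)
      Filter.atTop (nhds 0) := by
    have := (Real.continuous_sqrt.tendsto 0).comp habs
    simpa [Function.comp_def] using this
  have hrpow : Filter.Tendsto (fun k => μ * |(γ (φ k)).1 - t0| ^ α)
      Filter.atTop (nhds 0) := by
    have h := ((Real.continuousAt_rpow_const 0 α (Or.inr hα.le)).tendsto).comp habs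
    rw [Real.zero_rpow hα.ne'] at h
    simpa using h.const_mul μ
  have hdist : Filter.Tendsto (fun k => dist (g (φ k)) G) Filter.atTop (nhds 0) := by
    have := h2.dist (tendsto_const_nhds (x := G))
    simpa using this
  apply squeeze_zero (g := fun k =>
    Real.sqrt |(γ (φ k)).1 - t0| + (μ * |(γ (φ k)).1 - t0| ^ α + dist (g (φ k)) G))
  · intro k
    exact add_nonneg (Real.sqrt_nonneg _) (Real.iSup_nonneg fun s => norm_nonneg _)
  · intro k
    unfold parabolicDist
    apply add_le_add le_rfl
    have hne : Nonempty (Icc (0 : ℝ) (max (γ (φ k)).1 t0)) :=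
      ⟨⟨0, ⟨le_refl 0, le_max_of_le_left (ht (φ k)).1⟩⟩⟩
    apply ciSup_le
    intro s
    show ‖(γ (φ k)).2 (min s.1 (γ (φ k)).1) - q (min s.1 t0)‖ ≤
      μ * |(γ (φ k)).1 - t0| ^ α + dist (g (φ k)) G
    have hs0 : (0 : ℝ) ≤ s.1 := s.2.1
    -- rewrite lhs values
    have e1 : (γ (φ k)).2 (min s.1 (γ (φ k)).1) = f (φ k) s.1 := by
      simp only [hf, hcl, max_eq_left hs0]
    have e1' : f (φ k) s.1 = f (φ k) (min s.1 (γ (φ k)).1) := by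
      simp only [hf, hcl, max_eq_left hs0, max_eq_left (le_min hs0 (ht (φ k)).1),
        min_eq_left (min_le_right s.1 (γ (φ k)).1)]
    have hmm : min s.1 t0 ∈ Icc (0 : ℝ) T :=
      ⟨le_min hs0 ht0.1, (min_le_right _ _).trans ht0.2⟩
    have e2 : q (min s.1 t0) = G ⟨min s.1 t0, hmm⟩ :=
      hq_eq (min s.1 t0) ⟨le_min hs0 ht0.1, min_le_right _ _⟩
    have e3 : f (φ k) (min s.1 t0) = g (φ k) ⟨min s.1 t0, hmm⟩ := rfl
    rw [e1, e2]
    calc ‖f (φ k) s.1 - G ⟨min s.1 t0, hmm⟩‖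
        ≤ ‖f (φ k) s.1 - f (φ k) (min s.1 t0)‖ +
          ‖f (φ k) (min s.1 t0) - G ⟨min s.1 t0, hmm⟩‖ := by
          have := norm_sub_le_norm_sub_add_norm_sub (f (φ k) s.1)
            (f (φ k) (min s.1 t0)) (G ⟨min s.1 t0, hmm⟩)
          exact this
      _ ≤ μ * |(γ (φ k)).1 - t0| ^ α + dist (g (φ k)) G := by
          apply add_le_add
          · rw [e1']
            refine (hf_hold (φ k) _ _).trans ?_
            refine mul_le_mul_of_nonneg_left
              (Real.rpow_le_rpow (abs_nonneg _) ?_ hα.le) hμ.le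
            rw [min_comm s.1 (γ (φ k)).1, min_comm s.1 t0]
            exact abs_min_sub_min_le' (γ (φ k)).1 t0 s.1
          · rw [e3, ← dist_eq_norm]
            exact BoundedContinuousFunction.dist_coe_le_dist _
  · simpa using hsqrt.add (hrpow.add hdist)
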